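/- Newman-Garbage Lemma: Let (A, →) be an ARS and D ⊆ A a set of non-garbage elements such that → is weakly garbage separating (a ∈ D and a → b implies b ∈ D) and terminating modulo garbage (no infinite chain starting in D). Then → is confluent modulo garbage with respect to D if and only if it is locally confluent modulo garbage with respect to D. -/
import Mathlib


/-- An ARS is terminating iff there is no infinite reduction chain. -/
def Terminating {A : Type*} (r : A → A → Prop) : Prop :=
  ¬ ∃ f : ℕ → A, ∀ n, r (f n) (f (n + 1))

/-- An ARS is finitely branching iff every element has finitely many direct successors. -/
def FinitelyBranching {A : Type*} (r : A → A → Prop) : Prop :=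
  ∀ a, {b | r a b}.Finite

/-- Two elements are joinable iff they reduce to a common element. -/
def Joinable {A : Type*} (r : A → A → Prop) (a b : A) : Prop :=
  ∃ c, Relation.ReflTransGen r a c ∧ Relation.ReflTransGen r b c

/-- An ARS is confluent. -/
def Confluent {A : Type*} (r : A → A → Prop) : Prop :=
  ∀ x y₁ y₂, Relation.ReflTransGen r x y₁ → Relation.ReflTransGen r x y₂ →
    Joinable r y₁ y₂


/-- Weakly garbage separating: D is closed under single steps. -/
def WeaklyGarbageSeparating {A : Type*} (r : A → A → Prop) (D : Set A) : Prop :=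
  ∀ x y, r x y → x ∈ D → y ∈ D

/-- Terminating modulo garbage: no infinite chain starting in D. -/
def TerminatingModGarbage {A : Type*} (r : A → A → Prop) (D : Set A) : Prop :=
  ¬ ∃ f : ℕ → A, f 0 ∈ D ∧ ∀ n, r (f n) (f (n + 1))

/-- Confluent modulo garbage with respect to D. -/
def ConfluentModGarbage {A : Type*} (r : A → A → Prop) (D : Set A) : Prop :=
  ∀ x ∈ D, ∀ y₁ y₂, Relation.ReflTransGen r x y₁ → Relation.ReflTransGen r x y₂ →
    Joinable r y₁ y₂

/-- Locally confluent modulo garbage with respect to D. -/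
def LocallyConfluentModGarbage {A : Type*} (r : A → A → Prop) (D : Set A) : Prop :=
  ∀ x ∈ D, ∀ y₁ y₂, r x y₁ → r x y₂ → Joinable r y₁ y₂

/-- Newman-Garbage Lemma. -/
theorem newman_garbage {A : Type*} (r : A → A → Prop) (D : Set A)
    (hwgs : WeaklyGarbageSeparating r D) (ht : TerminatingModGarbage r D) :
    ConfluentModGarbage r D ↔ LocallyConfluentModGarbage r D := by
  constructor
  · intro hc x hx y₁ y₂ h1 h2
    exact hc x hx y₁ y₂ (Relation.ReflTransGen.single h1) (Relation.ReflTransGen.single h2)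
  · intro hlc
    have hacc : ∀ a ∈ D, Acc (fun x y => r y x) a := by
      by_contra h
      push_neg at h
      obtain ⟨a, ha, hna⟩ := h
      have step : ∀ x : {x // x ∈ D ∧ ¬ Acc (fun x y => r y x) x},
          ∃ y : {x // x ∈ D ∧ ¬ Acc (fun x y => r y x) x}, r x.1 y.1 := by
        rintro ⟨x, hxD, hxa⟩
        have h' : ¬ ∀ y, r x y → Acc (fun x y => r y x) y := fun h => hxa (Acc.intro x h)
        push_neg at h'
        obtain ⟨y, hry, hya⟩ := h'
        exact ⟨⟨y, hwgs x y hry hxD, hya⟩, hry⟩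
      choose g hg using step
      let f : ℕ → {x // x ∈ D ∧ ¬ Acc (fun x y => r y x) x} := fun n =>
        Nat.rec ⟨a, ha, hna⟩ (fun _ x => g x) n
      exact ht ⟨fun n => (f n).1, ha, fun n => hg (f n)⟩
    have main : ∀ a, Acc (fun x y => r y x) a → a ∈ D →
        ∀ y₁ y₂, Relation.ReflTransGen r a y₁ → Relation.ReflTransGen r a y₂ →
          Joinable r y₁ y₂ := by
      intro a hacc'
      induction hacc' with
      | intro a h ih =>
        intro haD y₁ y₂ h1 h2
        rcases Relation.ReflTransGen.cases_head h1 with rfl | ⟨b₁, hb₁, hb₁'⟩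
        · exact ⟨y₂, h2, Relation.ReflTransGen.refl⟩
        rcases Relation.ReflTransGen.cases_head h2 with rfl | ⟨b₂, hb₂, hb₂'⟩
        · exact ⟨y₁, Relation.ReflTransGen.refl, h1⟩
        obtain ⟨u, hu1, hu2⟩ := hlc a haD b₁ b₂ hb₁ hb₂
        obtain ⟨v, hv1, hv2⟩ := ih b₁ hb₁ (hwgs a b₁ hb₁ haD) y₁ u hb₁' hu1
        obtain ⟨w, hw1, hw2⟩ := ih b₂ hb₂ (hwgs a b₂ hb₂ haD) y₂ v hb₂' (hu2.trans hv2)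
        exact ⟨w, hv1.trans hw2, hw1⟩
    exact fun x hx => main x (hacc x hx) hx
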